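/- Let G be a group and c ∈ G an element of infinite order. If every element of infinite order in G lies in the cyclic subgroup ⟨c⟩, then G is metacyclic; more precisely, either G = ⟨c⟩ ≅ ℤ, or G ≅ ⟨a, c | a² = 1, a c a⁻¹ = c⁻¹⟩ ≅ ℤ/2 * ℤ/2. -/

import Mathlib

/-- A group is metacyclic if it has a cyclic normal subgroup with cyclic quotient. -/
def IsMetacyclic (G : Type*) [Group G] : Prop :=
  ∃ (N : Subgroup G) (_ : N.Normal), IsCyclic N ∧ IsCyclic (G ⧸ N)

section AuxMC

private def auxMC_zint (i : ZMod 0) : ℤ := i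

private lemma auxMC_zint_add (i j : ZMod 0) :
    auxMC_zint (i + j) = auxMC_zint i + auxMC_zint j := rfl

private lemma auxMC_zint_sub (i j : ZMod 0) :
    auxMC_zint (i - j) = auxMC_zint i - auxMC_zint j := rfl

private lemma auxMC_zint_inj {i j : ZMod 0} (h : auxMC_zint i = auxMC_zint j) : i = j := h

variable {G : Type*} [Group G]

private lemma auxMC_zpow_inj {c : G} (hc : ¬ IsOfFinOrder c) {i j : ℤ} (h : c ^ i = c ^ j) :
    i = j :=
  (injective_zpow_iff_not_isOfFinOrder.mpr hc) h

private lemma auxMC_conj_fin {c g : G} (h : IsOfFinOrder (g * c * g⁻¹)) : IsOfFinOrder c := by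
  obtain ⟨n, hn, he⟩ := (isOfFinOrder_iff_pow_eq_one).mp h
  rw [conj_pow] at he
  refine isOfFinOrder_iff_pow_eq_one.mpr ⟨n, hn, ?_⟩
  have h2 : g * c ^ n * g⁻¹ = g * 1 * g⁻¹ := by rw [he]; group
  exact mul_left_cancel (mul_right_cancel h2)

/-- every element outside `zpowers c` inverts `c` by conjugation. -/
private lemma auxMC_conj {c : G} (hc : ¬ IsOfFinOrder c)
    (hall : ∀ g : G, ¬ IsOfFinOrder g → g ∈ Subgroup.zpowers c) :
    ∀ g : G, g ∉ Subgroup.zpowers c → g * c * g⁻¹ = c⁻¹ := by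
  intro g hg
  have hgfin : IsOfFinOrder g := by
    by_contra h; exact hg (hall g h)
  have hconjfin : ¬ IsOfFinOrder (g * c * g⁻¹) := fun h => hc (auxMC_conj_fin h)
  obtain ⟨k, hk⟩ := Subgroup.mem_zpowers_iff.mp (hall _ hconjfin)
  -- iterate conjugation
  have key : ∀ m : ℕ, g ^ m * c * (g ^ m)⁻¹ = c ^ (k ^ m) := by
    intro m
    induction m with
    | zero => simp
    | succ m ih =>
      have h3 : g ^ (m + 1) * c * (g ^ (m + 1))⁻¹ = g * (g ^ m * c * (g ^ m)⁻¹) * g⁻¹ := by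
        rw [pow_succ']; group
      rw [h3, ih, ← conj_zpow, hk.symm, ← zpow_mul, pow_succ, mul_comm (k ^ m) k]
  have hn := hgfin.orderOf_pos
  have hgn : g ^ orderOf g = 1 := pow_orderOf_eq_one g
  have hkn : k ^ orderOf g = 1 := by
    have h4 := key (orderOf g)
    rw [hgn] at h4
    simp only [one_mul, inv_one, mul_one] at h4
    exact (auxMC_zpow_inj hc (i := 1) (j := k ^ orderOf g) (by simpa using h4)).symm
  have hku : IsUnit k := IsUnit.of_pow_eq_one hkn hn.ne'
  rcases Int.isUnit_iff.mp hku with h1 | h1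
  · -- k = 1 : g commutes with c, contradiction
    exfalso
    rw [h1] at hk
    have hcomm : Commute g c := by
      have h5 : g * c = c * g := by
        have h6 : g * c * g⁻¹ = c := by simpa using hk.symm
        calc g * c = (g * c * g⁻¹) * g := by group
        _ = c * g := by rw [h6]
      exact h5
    have hgc : g * c ∉ Subgroup.zpowers c := by
      intro hm
      exact hg (by simpa using Subgroup.mul_mem _ hm (Subgroup.inv_mem _ (Subgroup.mem_zpowers c)))
    have hgcfin : IsOfFinOrder (g * c) := by
      by_contra h; exact hgc (hall _ h)
    have hm := hgcfin.orderOf_pos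
    apply hc
    refine isOfFinOrder_iff_pow_eq_one.mpr ⟨orderOf g * orderOf (g * c), by positivity, ?_⟩
    have e1 : (g * c) ^ (orderOf g * orderOf (g * c)) = 1 := by
      rw [mul_comm, pow_mul, pow_orderOf_eq_one, one_pow]
    rw [hcomm.mul_pow] at e1
    have e2 : g ^ (orderOf g * orderOf (g * c)) = 1 := by
      rw [pow_mul, hgn, one_pow]
    rw [e2, one_mul] at e1
    exact e1
  · rw [h1] at hk
    simpa using hk.symm

/-- any element conjugates `c` to `c` or `c⁻¹`. -/
private lemma auxMC_conj' {c : G} (hc : ¬ IsOfFinOrder c)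
    (hall : ∀ g : G, ¬ IsOfFinOrder g → g ∈ Subgroup.zpowers c) (g : G) :
    g * c * g⁻¹ = c ∨ g * c * g⁻¹ = c⁻¹ := by
  by_cases hg : g ∈ Subgroup.zpowers c
  · left
    obtain ⟨k, hk⟩ := Subgroup.mem_zpowers_iff.mp hg
    have h1 : Commute g c := by rw [← hk]; exact (Commute.refl c).zpow_left k
    rw [h1.eq]; group
  · right; exact auxMC_conj hc hall g hg

/-- product of two elements outside `zpowers c` lies in `zpowers c`. -/
private lemma auxMC_prod {c : G} (hc : ¬ IsOfFinOrder c)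
    (hall : ∀ g : G, ¬ IsOfFinOrder g → g ∈ Subgroup.zpowers c)
    {g h : G} (hg : g ∉ Subgroup.zpowers c) (hh : h ∉ Subgroup.zpowers c) :
    g * h ∈ Subgroup.zpowers c := by
  by_contra hgh
  have e1 := auxMC_conj hc hall _ hgh
  have e2 : (g * h) * c * (g * h)⁻¹ = c := by
    have eh := auxMC_conj hc hall h hh
    have eg := auxMC_conj hc hall g hg
    calc (g * h) * c * (g * h)⁻¹ = g * (h * c * h⁻¹) * g⁻¹ := by group
    _ = g * c⁻¹ * g⁻¹ := by rw [eh]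
    _ = (g * c * g⁻¹)⁻¹ := by group
    _ = c := by rw [eg]; group
  have e3 : c = c⁻¹ := e2.symm.trans e1
  apply hc
  refine isOfFinOrder_iff_pow_eq_one.mpr ⟨2, by norm_num, ?_⟩
  rw [pow_two]
  nth_rewrite 2 [e3]
  exact mul_inv_cancel c

private def auxMC_dihMap (c a : G) : DihedralGroup 0 → G
  | .r i => c ^ auxMC_zint i
  | .sr i => a * c ^ auxMC_zint i

private lemma auxMC_dihMap_r (c a : G) (i : ZMod 0) :
    auxMC_dihMap c a (.r i) = c ^ auxMC_zint i := rfl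

private lemma auxMC_dihMap_sr (c a : G) (i : ZMod 0) :
    auxMC_dihMap c a (.sr i) = a * c ^ auxMC_zint i := rfl

end AuxMC

theorem metacyclic_of_infinite_order_elements_in_zpowers {G : Type*} [Group G]
    (c : G) (hc : ¬ IsOfFinOrder c)
    (hall : ∀ g : G, ¬ IsOfFinOrder g → g ∈ Subgroup.zpowers c) :
    IsMetacyclic G ∧
      ((Subgroup.zpowers c = ⊤ ∧ Nonempty (G ≃* Multiplicative ℤ)) ∨
        Nonempty (G ≃* DihedralGroup 0)) := by
  set N := Subgroup.zpowers c with hN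
  have hnormal : N.Normal := by
    constructor
    intro x hx g
    obtain ⟨m, hm⟩ := Subgroup.mem_zpowers_iff.mp hx
    rw [← hm]
    have h1 : g * c ^ m * g⁻¹ = (g * c * g⁻¹) ^ m := conj_zpow.symm
    rw [h1]
    rcases auxMC_conj' hc hall g with h | h <;> rw [h]
    · exact Subgroup.zpow_mem _ (Subgroup.mem_zpowers c) m
    · exact Subgroup.zpow_mem _ (Subgroup.inv_mem _ (Subgroup.mem_zpowers c)) m
  have hcycN : IsCyclic N := by
    refine ⟨⟨⟨c, Subgroup.mem_zpowers c⟩, fun x => ?_⟩⟩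
    obtain ⟨k, hk⟩ := Subgroup.mem_zpowers_iff.mp x.2
    refine Subgroup.mem_zpowers_iff.mpr ⟨k, ?_⟩
    ext
    simpa using hk
  have hquot : IsCyclic (G ⧸ N) := by
    by_cases htop : ∀ g : G, g ∈ N
    · refine ⟨⟨(1 : G ⧸ N), fun y => ?_⟩⟩
      obtain ⟨g, rfl⟩ := QuotientGroup.mk_surjective y
      have h1 : (QuotientGroup.mk g : G ⧸ N) = 1 := (QuotientGroup.eq_one_iff g).mpr (htop g)
      rw [h1]; exact ⟨0, by simp⟩
    · push_neg at htop
      obtain ⟨a, ha⟩ := htop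
      refine ⟨⟨QuotientGroup.mk a, fun y => ?_⟩⟩
      obtain ⟨g, rfl⟩ := QuotientGroup.mk_surjective y
      by_cases hg : g ∈ N
      · have h1 : (QuotientGroup.mk g : G ⧸ N) = 1 := (QuotientGroup.eq_one_iff g).mpr hg
        rw [h1]; exact ⟨0, by simp⟩
      · have hainv : a⁻¹ ∉ N := fun h => ha (by simpa using Subgroup.inv_mem _ h)
        have hmem : a⁻¹ * g ∈ N := auxMC_prod hc hall hainv hg
        have h2 : (QuotientGroup.mk a : G ⧸ N) = QuotientGroup.mk g := by
          rw [QuotientGroup.eq]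
          exact hmem
        rw [← h2]
        exact Subgroup.mem_zpowers _
  have hmeta : IsMetacyclic G := ⟨N, hnormal, hcycN, hquot⟩
  refine ⟨hmeta, ?_⟩
  by_cases htop : N = ⊤
  · left
    refine ⟨htop, ?_⟩
    have hinj : Function.Injective (zpowersHom G c) := by
      intro x y h
      simp only [zpowersHom_apply] at h
      exact Multiplicative.toAdd.injective (auxMC_zpow_inj hc h)
    have hsurj : Function.Surjective (zpowersHom G c) := by
      intro g
      have h1 : g ∈ N := htop ▸ Subgroup.mem_top g
      obtain ⟨k, hk⟩ := Subgroup.mem_zpowers_iff.mp h1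
      exact ⟨Multiplicative.ofAdd k, by simpa using hk⟩
    exact ⟨(MulEquiv.ofBijective _ ⟨hinj, hsurj⟩).symm⟩
  · right
    obtain ⟨a, ha⟩ : ∃ a : G, a ∉ N := by
      by_contra h
      push_neg at h
      exact htop (Subgroup.eq_top_iff' N |>.mpr h)
    have haconj : a * c * a⁻¹ = c⁻¹ := auxMC_conj hc hall a ha
    have hconjz : ∀ i : ℤ, a * c ^ i * a⁻¹ = c ^ (-i) := by
      intro i
      rw [← conj_zpow, haconj, ← zpow_neg_one, ← zpow_mul, neg_one_mul]
    have hswap : ∀ i : ℤ, c ^ i * a = a * c ^ (-i) := by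
      intro i
      have h1 := hconjz (-i)
      rw [neg_neg] at h1
      calc c ^ i * a = (a * c ^ (-i) * a⁻¹) * a := by rw [h1]
      _ = a * c ^ (-i) := by group
    have ha2 : a * a = 1 := by
      have hmem : a * a ∈ N := auxMC_prod hc hall ha ha
      obtain ⟨k, hk⟩ := Subgroup.mem_zpowers_iff.mp hmem
      have e1 : a * c ^ k * a⁻¹ = c ^ k := by
        rw [hk]; group
      have e2 : c ^ (-k) = c ^ k := by rw [← hconjz k, e1]
      have e3 := auxMC_zpow_inj hc e2
      have hk0 : k = 0 := by omega
      rw [hk0] at hk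
      simpa using hk.symm
    -- build the hom
    let F : DihedralGroup 0 →* G :=
      { toFun := auxMC_dihMap c a
        map_one' := by
          show c ^ (0 : ℤ) = 1
          norm_num
        map_mul' := by
          rintro (i | i) (j | j)
          · show c ^ auxMC_zint (i + j) = c ^ auxMC_zint i * c ^ auxMC_zint j
            rw [auxMC_zint_add, zpow_add]
          · show a * c ^ auxMC_zint (j - i) = c ^ auxMC_zint i * (a * c ^ auxMC_zint j)
            rw [auxMC_zint_sub, ← mul_assoc, hswap, mul_assoc, ← zpow_add]
            congr 1
            ring
          · show a * c ^ auxMC_zint (i + j) = a * c ^ auxMC_zint i * c ^ auxMC_zint j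
            rw [auxMC_zint_add, mul_assoc, ← zpow_add]
          · show c ^ auxMC_zint (j - i) = a * c ^ auxMC_zint i * (a * c ^ auxMC_zint j)
            rw [auxMC_zint_sub]
            symm
            calc a * c ^ auxMC_zint i * (a * c ^ auxMC_zint j)
                = a * (c ^ auxMC_zint i * a) * c ^ auxMC_zint j := by group
            _ = a * (a * c ^ (-auxMC_zint i)) * c ^ auxMC_zint j := by rw [hswap]
            _ = (a * a) * (c ^ (-auxMC_zint i) * c ^ auxMC_zint j) := by group
            _ = c ^ (-auxMC_zint i + auxMC_zint j) := by rw [ha2, one_mul, ← zpow_add]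
            _ = c ^ (auxMC_zint j - auxMC_zint i) := by congr 1; ring }
    have hFr : ∀ i : ZMod 0, F (.r i) = c ^ auxMC_zint i := fun i => rfl
    have hFsr : ∀ i : ZMod 0, F (.sr i) = a * c ^ auxMC_zint i := fun i => rfl
    have hinj : Function.Injective F := by
      rintro (i | i) (j | j) h
      · rw [hFr, hFr] at h
        exact congrArg DihedralGroup.r (auxMC_zint_inj (auxMC_zpow_inj hc h))
      · rw [hFr, hFsr] at h
        exfalso
        apply ha
        have h1 : a = c ^ auxMC_zint i * (c ^ auxMC_zint j)⁻¹ := by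
          rw [h]; group
        rw [h1]
        exact Subgroup.mul_mem _ (Subgroup.zpow_mem _ (Subgroup.mem_zpowers c) _)
          (Subgroup.inv_mem _ (Subgroup.zpow_mem _ (Subgroup.mem_zpowers c) _))
      · rw [hFr, hFsr] at h
        exfalso
        apply ha
        have h1 : a = c ^ auxMC_zint j * (c ^ auxMC_zint i)⁻¹ := by
          rw [← h]; group
        rw [h1]
        exact Subgroup.mul_mem _ (Subgroup.zpow_mem _ (Subgroup.mem_zpowers c) _)
          (Subgroup.inv_mem _ (Subgroup.zpow_mem _ (Subgroup.mem_zpowers c) _))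
      · rw [hFsr, hFsr] at h
        exact congrArg DihedralGroup.sr (auxMC_zint_inj (auxMC_zpow_inj hc (mul_left_cancel h)))
    have hsurj : Function.Surjective F := by
      intro g
      by_cases hg : g ∈ N
      · obtain ⟨k, hk⟩ := Subgroup.mem_zpowers_iff.mp hg
        exact ⟨.r k, hk⟩
      · have hainv : a⁻¹ ∉ N := fun h => ha (by simpa using Subgroup.inv_mem _ h)
        have hmem : a⁻¹ * g ∈ N := auxMC_prod hc hall hainv hg
        obtain ⟨k, hk⟩ := Subgroup.mem_zpowers_iff.mp hmem
        refine ⟨.sr k, ?_⟩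
        rw [hFsr k]
        show a * c ^ (k : ℤ) = g
        rw [hk]
        group
    exact ⟨(MulEquiv.ofBijective F ⟨hinj, hsurj⟩).symm⟩
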